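/- ⊢ R(φ→ψ) → (Rφ → Rψ) for all formulae φ, ψ ∈ Φ. -/
import Mathlib


/-- Formulae of the language Φ: propositional variables, negation, implication,
the necessity modality `N` (`nec`), and the attacker's blameworthiness modality `A` (`blame`). -/
inductive Formula : Type
  | var : ℕ → Formula
  | neg : Formula → Formula
  | imp : Formula → Formula → Formula
  | nec : Formula → Formula
  | blame : Formula → Formula

namespace Formula

/-- Conjunction, defined through `→` and `¬` in the standard way. -/
def conj (φ ψ : Formula) : Formula := neg (imp φ (neg ψ))

/-- Disjunction, defined through `→` and `¬` in the standard way. -/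
def disj (φ ψ : Formula) : Formula := imp (neg φ) ψ

/-- Biconditional, defined through `→` and `¬` in the standard way. -/
def biimp (φ ψ : Formula) : Formula := conj (imp φ ψ) (imp ψ φ)

/-- `R φ` is an abbreviation for `¬(φ → A φ)`. -/
def R (φ : Formula) : Formula := neg (imp φ (blame φ))

end Formula

/-- A formula is a propositional tautology if it evaluates to true under every
truth assignment that respects `¬` and `→` (treating all other formulae as atoms). -/
def IsTaut (φ : Formula) : Prop :=
  ∀ v : Formula → Bool,
    (∀ ψ, v ψ.neg = !(v ψ)) →
    (∀ ψ χ, v (ψ.imp χ) = (!(v ψ) || v χ)) →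
    v φ = true

/-- Provability `⊢ φ` in the logical system for blameworthiness in security games. -/
inductive Prov : Formula → Prop
  | taut {φ} : IsTaut φ → Prov φ
  | truthN (φ : Formula) : Prov ((φ.nec).imp φ)
  | truthA (φ : Formula) : Prov ((φ.blame).imp φ)
  | negIntro (φ : Formula) : Prov (((φ.nec).neg).imp (((φ.nec).neg).nec))
  | distrib (φ ψ : Formula) : Prov (((φ.imp ψ).nec).imp ((φ.nec).imp (ψ.nec)))
  | unavoid (φ : Formula) : Prov ((φ.nec).imp ((φ.blame).neg))
  | strictCond (φ ψ : Formula) : Prov (((φ.imp ψ).nec).imp ((ψ.blame).imp (φ.imp (φ.blame))))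
  | conjAx (φ ψ : Formula) : Prov (((φ.conj ψ).blame).imp ((φ.blame).disj (ψ.blame)))
  | noBlame (φ : Formula) : Prov (((φ.imp (φ.blame)).blame).neg)
  | mp {φ ψ} : Prov (φ.imp ψ) → Prov φ → Prov ψ
  | necRule {φ} : Prov φ → Prov (φ.nec)

/-- `X ⊢ φ`: provability from the theorems of the logical system together with
additional hypotheses `X`, using only the Modus Ponens rule. -/
inductive ProvFrom (X : Set Formula) : Formula → Prop
  | hyp {φ} : φ ∈ X → ProvFrom X φ
  | thm {φ} : Prov φ → ProvFrom X φ
  | mp {φ ψ} : ProvFrom X (φ.imp ψ) → ProvFrom X φ → ProvFrom X ψ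

/-- A set of formulae is consistent if no contradiction is derivable from it. -/
def Consistent (X : Set Formula) : Prop := ¬ ∃ φ, ProvFrom X φ ∧ ProvFrom X φ.neg

/-- A maximal consistent set of formulae. -/
def MaxConsistent (X : Set Formula) : Prop :=
  Consistent X ∧ ∀ Y, X ⊆ Y → Consistent Y → Y = X

/-- A security game: a set `D` of actions of the defender; for each `d ∈ D` a
nonempty set `A d` of actions of the attacker in response to `d`; and a valuation
assigning to each propositional variable a set of action profiles `(d, a)`. -/
structure SecurityGame where
  D : Type
  A : D → Type
  nonempty : ∀ d, Nonempty (A d)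
  val : ℕ → ∀ d : D, A d → Prop

/-- The satisfaction relation `(d, a) ⊨ φ` of a security game. -/
def Sat (G : SecurityGame) : Formula → ∀ d : G.D, G.A d → Prop
  | .var p, d, a => G.val p d a
  | .neg φ, d, a => ¬ Sat G φ d a
  | .imp φ ψ, d, a => Sat G φ d a → Sat G ψ d a
  | .nec φ, _, _ => ∀ (d' : G.D) (a' : G.A d'), Sat G φ d' a'
  | .blame φ, d, a => Sat G φ d a ∧ ∃ a' : G.A d, ¬ Sat G φ d a'

/-- The set Ω of the canonical game `G(X)`: all maximal consistent sets of formulae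
containing `{φ | N φ ∈ X}`. -/
def canonicalOmega (X : Set Formula) : Set (Set Formula) :=
  {ω | MaxConsistent ω ∧ ∀ φ, φ.nec ∈ X → φ ∈ ω}

/-- The indistinguishability relation `ω ∼ ω'` of the canonical game. -/
def simRel (ω ω' : Set Formula) : Prop := ∀ φ : Formula, φ.R ∈ ω ↔ φ.R ∈ ω'

/-- The `∼`-equivalence class `[δ]` of `δ` inside Ω. -/
def eqClass (X : Set Formula) (δ : Set Formula) : Set (Set Formula) :=
  {ω ∈ canonicalOmega X | simRel δ ω}

/-- The canonical security game `G(X)`. -/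
def canonicalGame (X : Set Formula) : SecurityGame where
  D := canonicalOmega X
  A := fun δ => {ω : canonicalOmega X // simRel δ.val ω.val}
  nonempty := fun δ => ⟨⟨δ, fun _ => Iff.rfl⟩⟩
  val := fun p _ a => Formula.var p ∈ a.val.val

namespace RDistribAux

/-- Substitution of formulae for propositional variables. -/
def subst (σ : ℕ → Formula) : Formula → Formula
  | .var n => σ n
  | .neg t => .neg (subst σ t)
  | .imp s t => .imp (subst σ s) (subst σ t)
  | .nec t => .nec (subst σ t)
  | .blame t => .blame (subst σ t)

lemma isTaut_subst (σ : ℕ → Formula) {t : Formula} (h : IsTaut t) :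
    IsTaut (subst σ t) := by
  intro v hn hi
  exact h (fun χ => v (subst σ χ)) (fun χ => by simp [subst, hn])
    (fun χ₁ χ₂ => by simp [subst, hi])

open Formula

/-- atoms -/
def a : Formula := var 0
def b : Formula := var 1
def n : Formula := var 2
def y : Formula := var 3
def w : Formula := var 4
def x : Formula := var 5
def z : Formula := var 6

def θ' : Formula := a.conj (a.imp b)

def G' : Formula :=
  (neg ((a.imp b).imp z)).imp ((neg (a.imp x)).imp (neg (b.imp y)))

def T : Formula :=
  n.imp ((n.imp (y.imp (θ'.imp w))).imp ((w.imp (x.disj z)).imp G'))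

lemma taut_T : IsTaut T := by
  intro v hn hi
  simp only [T, G', θ', Formula.conj, Formula.disj, a, b, n, y, w, x, z, hn, hi]
  cases v (var 0) <;> cases v (var 1) <;> cases v (var 2) <;> cases v (var 3) <;>
    cases v (var 4) <;> cases v (var 5) <;> cases v (var 6) <;> simp

lemma taut_theta_imp_b : IsTaut (θ'.imp b) := by
  intro v hn hi
  simp only [θ', Formula.conj, a, b, hn, hi]
  cases v (var 0) <;> cases v (var 1) <;> simp

end RDistribAux

/-- `⊢ R(φ → ψ) → (R φ → R ψ)` for all formulae `φ`, `ψ`. -/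
theorem R_distributivity (φ ψ : Formula) :
    Prov (((φ.imp ψ).R).imp ((φ.R).imp ψ.R)) := by
  open RDistribAux in
  let θ : Formula := φ.conj (φ.imp ψ)
  let σ : ℕ → Formula := fun i =>
    match i with
    | 0 => φ
    | 1 => ψ
    | 2 => (θ.imp ψ).nec
    | 3 => ψ.blame
    | 4 => θ.blame
    | 5 => φ.blame
    | 6 => (φ.imp ψ).blame
    | m+7 => .var (m+7)
  have h1 : Prov ((θ.imp ψ).nec) :=
    Prov.necRule (Prov.taut (isTaut_subst σ taut_theta_imp_b))
  have ht : Prov (subst σ T) := Prov.taut (isTaut_subst σ taut_T)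
  exact Prov.mp (Prov.mp (Prov.mp ht h1) (Prov.strictCond θ ψ)) (Prov.conjAx φ (φ.imp ψ))
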